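/- arXiv:2304.10956 — 14 statements merged into one kernel-verified Lean document; each statement's English description precedes it below -/
import Mathlib

section
/- Let P be a complete lattice. For every type S, every family f : S → P, every family of ultrafilters μ : T → Ultrafilter S, and every ultrafilter ν : Ultrafilter T, the canonical ultraproduct is laxly associative: ⨆ A ∈ (ν.bind μ), ⨅ s ∈ A, f s ≤ ⨆ B ∈ ν, ⨅ t ∈ B, (⨆ A ∈ μ t, ⨅ s ∈ A, f s). (Here Ultrafilter.bind ν μ is the ultrafilter on S with A ∈ ν.bind μ ↔ {t | A ∈ μ t} ∈ ν.) -/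
/-- Lax associativity of the canonical ultraproduct in a complete lattice. -/
theorem canonical_ultraproduct_lax_assoc {P : Type*} [CompleteLattice P]
    {S T : Type*} (f : S → P) (μ : T → Ultrafilter S) (ν : Ultrafilter T) :
    ⨆ A ∈ ν.bind μ, ⨅ s ∈ A, f s ≤
      ⨆ B ∈ ν, ⨅ t ∈ B, ⨆ A ∈ μ t, ⨅ s ∈ A, f s := by
  refine iSup₂_le fun A hA => ?_
  have hB : {t | A ∈ μ t} ∈ ν := hA
  refine le_trans ?_ (le_iSup₂ {t | A ∈ μ t} hB)
  exact le_iInf₂ fun t ht => le_iSup₂_of_le A ht le_rfl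
end

section
/- Let P and Q be complete lattices and φ : P → Q a monotone map. Then φ is a left ultrafunctor for the canonical ultrastructures, i.e. for every type S, every f : S → P, and every μ : Ultrafilter S one has φ (⨆ A ∈ μ, ⨅ s ∈ A, f s) ≤ ⨆ A ∈ μ, ⨅ s ∈ A, φ (f s), if and only if φ preserves suprema of nonempty directed sets, i.e. for every d : Set P with d nonempty and DirectedOn (· ≤ ·) d, φ (sSup d) = ⨆ x ∈ d, φ x. -/
universe u v

/-- A monotone map between complete lattices is a left ultrafunctor for the
canonical ultrastructures iff it preserves suprema of nonempty directed sets
(i.e. iff it is Scott-continuous). -/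
theorem leftUltrafunctor_iff_scottContinuous {P : Type u} {Q : Type v}
    [CompleteLattice P] [CompleteLattice Q] (φ : P → Q) (hφ : Monotone φ) :
    (∀ (S : Type u) (f : S → P) (μ : Ultrafilter S),
        φ (⨆ A ∈ μ, ⨅ s ∈ A, f s) ≤ ⨆ A ∈ μ, ⨅ s ∈ A, φ (f s)) ↔
      (∀ d : Set P, d.Nonempty → DirectedOn (· ≤ ·) d →
        φ (sSup d) = ⨆ x ∈ d, φ x) := by
  constructor
  · intro h d hd hdir
    refine le_antisymm ?_ (iSup₂_le fun x hx => hφ (le_sSup hx))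
    haveI : Nonempty d := hd.to_subtype
    set B : d → Set d := fun x => {s : d | (x : P) ≤ s} with hB
    have hBne : ∀ x, (B x).Nonempty := fun x => ⟨x, le_refl _⟩
    have hdirF : Directed (· ≥ ·) (fun x => Filter.principal (B x)) := by
      intro x y
      obtain ⟨z, hz, hxz, hyz⟩ := hdir x x.2 y y.2
      exact ⟨⟨z, hz⟩, Filter.principal_mono.2 (fun s hs => hxz.trans hs),
        Filter.principal_mono.2 (fun s hs => hyz.trans hs)⟩
    have hne : (⨅ x, Filter.principal (B x)).NeBot :=
      Filter.iInf_neBot_of_directed hdirF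
        (fun x => Filter.principal_neBot_iff.2 (hBne x))
    obtain ⟨μ, hμ⟩ := Ultrafilter.exists_le (⨅ x, Filter.principal (B x))
    have hmem : ∀ x : d, B x ∈ μ := fun x =>
      hμ (Filter.mem_iInf_of_mem x (Filter.mem_principal_self _))
    have key : sSup d ≤ ⨆ A ∈ μ, ⨅ s ∈ A, ((s : d) : P) := by
      apply sSup_le
      intro x hx
      refine le_trans ?_ (le_iSup₂ (B ⟨x, hx⟩) (hmem ⟨x, hx⟩))
      exact le_iInf₂ fun s hs => hs
    calc φ (sSup d) ≤ φ (⨆ A ∈ μ, ⨅ s ∈ A, ((s : d) : P)) := hφ key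
      _ ≤ ⨆ A ∈ μ, ⨅ s ∈ A, φ ((s : d) : P) := h d (fun s => (s : P)) μ
      _ ≤ ⨆ x ∈ d, φ x := by
          apply iSup₂_le
          intro A hA
          obtain ⟨s, hs⟩ := μ.nonempty_of_mem hA
          exact le_trans (iInf₂_le s hs) (le_iSup₂ (f := fun x (_ : x ∈ d) => φ x) (s : P) s.2)
  · intro h S f μ
    set D : Set P := (fun A : Set S => ⨅ s ∈ A, f s) '' {A | A ∈ μ} with hD
    have hDne : D.Nonempty := ⟨_, Set.mem_image_of_mem _ (μ.univ_mem : Set.univ ∈ μ)⟩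
    have hdir : DirectedOn (· ≤ ·) D := by
      rintro _ ⟨A, hA, rfl⟩ _ ⟨A', hA', rfl⟩
      refine ⟨⨅ s ∈ A ∩ A', f s,
        ⟨A ∩ A', Filter.inter_mem hA hA', rfl⟩, ?_, ?_⟩
      · exact le_iInf₂ fun s hs => iInf₂_le s hs.1
      · exact le_iInf₂ fun s hs => iInf₂_le s hs.2
    have hsup : sSup D = ⨆ A ∈ μ, ⨅ s ∈ A, f s := by
      rw [hD, sSup_image]; rfl
    rw [← hsup, h D hDne hdir]
    apply iSup₂_le
    rintro _ ⟨A, hA, rfl⟩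
    refine le_trans ?_ (le_iSup₂ A hA)
    exact le_iInf₂ fun s hs => hφ (iInf₂_le s hs)
end

section
/- (Łoś ultraproduct theorem for propositional logic.) Let D be a distributive lattice with ⊤ and ⊥. Let S be a type, x : S → Order.Ideal D a family of ideals such that (x s).IsPrime for every s, and μ : Ultrafilter S. Then there exists a prime ideal J : Order.Ideal D with J.IsPrime such that for every p : D, p ∈ J ↔ {s | p ∈ x s} ∈ μ. -/
/-- Łoś ultraproduct theorem for propositional logic: given a family of prime
ideals of a bounded distributive lattice and an ultrafilter on the index set,
there is a prime ideal whose membership is given by the ultrafilter. -/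
theorem los_propositional {D : Type*} [DistribLattice D] [BoundedOrder D]
    {S : Type*} (x : S → Order.Ideal D) (hx : ∀ s, (x s).IsPrime)
    (μ : Ultrafilter S) :
    ∃ J : Order.Ideal D, J.IsPrime ∧ ∀ p : D, p ∈ J ↔ {s | p ∈ x s} ∈ μ := by
  set Jset : Set D := {p | {s | p ∈ x s} ∈ μ} with hJset
  have hIsIdeal : Order.IsIdeal Jset := by
    refine ⟨?_, ?_, ?_⟩
    · intro a b hba ha
      exact μ.toFilter.mem_of_superset ha fun s hs => (x s).lower hba hs
    · exact ⟨⊥, μ.toFilter.mem_of_superset μ.toFilter.univ_mem fun s _ => Order.Ideal.bot_mem _⟩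
    · intro p hp q hq
      refine ⟨p ⊔ q, ?_, le_sup_left, le_sup_right⟩
      have := Filter.inter_mem hp hq
      exact μ.toFilter.mem_of_superset this fun s ⟨h1, h2⟩ => (x s).sup_mem h1 h2
  refine ⟨hIsIdeal.toIdeal, ?_, fun p => Iff.rfl⟩
  have hproper : Order.Ideal.IsProper hIsIdeal.toIdeal := by
    apply Order.Ideal.isProper_of_notMem (p := ⊤)
    have he : {s | (⊤ : D) ∈ x s} = ∅ := by
      ext s; simpa using ((hx s).toIsProper).top_notMem
    intro h
    rw [show ((⊤:D) ∈ hIsIdeal.toIdeal) = ({s | (⊤:D) ∈ x s} ∈ μ) from rfl, he] at h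
    exact μ.toFilter.empty_notMem h
  exact Order.Ideal.IsPrime.of_mem_or_mem (fun {p q} hpq => by
    have : {s | p ⊓ q ∈ x s} ⊆ {s | p ∈ x s} ∪ {s | q ∈ x s} := fun s hs =>
      (hx s).mem_or_mem hs
    have := μ.toFilter.mem_of_superset hpq this
    rcases (Ultrafilter.union_mem_iff).mp this with h | h
    · exact Or.inl h
    · exact Or.inr h)
end

section
/- Let P be a complete lattice. Then the canonically closed subsets of P form the closed sets of a topology: P itself and ∅ are canonically closed, the intersection of an arbitrary family of canonically closed subsets is canonically closed, and the union of two canonically closed subsets is canonically closed. -/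
universe u v

/-- A subset of a complete lattice is canonically closed if it is closed under
canonical ultraproducts of families valued in it. -/
def CanonicallyClosed {P : Type u} [CompleteLattice P] (K : Set P) : Prop :=
  ∀ (S : Type u) (f : S → P), (∀ s, f s ∈ K) →
    ∀ μ : Ultrafilter S, (⨆ A ∈ μ, ⨅ s ∈ A, f s) ∈ K

private lemma ultra_congr {P : Type u} [CompleteLattice P] {S : Type u}
    (f g : S → P) (μ : Ultrafilter S) {B : Set S} (hB : B ∈ μ)
    (h : ∀ s ∈ B, f s = g s) :
    (⨆ A ∈ μ, ⨅ s ∈ A, f s) = ⨆ A ∈ μ, ⨅ s ∈ A, g s := by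
  have key : ∀ (f g : S → P), (∀ s ∈ B, f s = g s) →
      (⨆ A ∈ μ, ⨅ s ∈ A, f s) ≤ ⨆ A ∈ μ, ⨅ s ∈ A, g s := by
    intro f g h
    refine iSup₂_le fun A hA => ?_
    have hAB : A ∩ B ∈ μ := μ.toFilter.inter_mem hA hB
    calc ⨅ s ∈ A, f s ≤ ⨅ s ∈ A ∩ B, f s :=
          biInf_mono fun s hs => hs.1
      _ = ⨅ s ∈ A ∩ B, g s := biInf_congr fun s hs => h s hs.2
      _ ≤ ⨆ A ∈ μ, ⨅ s ∈ A, g s := le_iSup₂ (f := fun A _ => ⨅ s ∈ A, g s) _ hAB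
  exact le_antisymm (key f g h) (key g f fun s hs => (h s hs).symm)

private lemma ultra_mem {P : Type u} [CompleteLattice P] {K : Set P}
    (hK : CanonicallyClosed K) {S : Type u} (f : S → P) (μ : Ultrafilter S)
    {B : Set S} (hB : B ∈ μ) (hf : ∀ s ∈ B, f s ∈ K) :
    (⨆ A ∈ μ, ⨅ s ∈ A, f s) ∈ K := by
  obtain ⟨s₀, hs₀⟩ := μ.nonempty_of_mem hB
  classical
  set g : S → P := fun s => if f s ∈ K then f s else f s₀ with hg
  have hgK : ∀ s, g s ∈ K := by
    intro s
    by_cases h : f s ∈ K <;> simp [hg, h, hf s₀ hs₀]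
  have := hK S g hgK μ
  rwa [ultra_congr f g μ hB fun s hs => by simp [hg, hf s hs]]

/-- The canonically closed subsets of a complete lattice form the closed sets
of a topology. -/
theorem canonicallyClosed_topology {P : Type u} [CompleteLattice P] :
    CanonicallyClosed (Set.univ : Set P) ∧
    CanonicallyClosed (∅ : Set P) ∧
    (∀ (ι : Type v) (K : ι → Set P), (∀ i, CanonicallyClosed (K i)) →
      CanonicallyClosed (⋂ i, K i)) ∧
    (∀ K L : Set P, CanonicallyClosed K → CanonicallyClosed L →
      CanonicallyClosed (K ∪ L)) := by
  refine ⟨fun S f hf μ => trivial, fun S f hf μ => ?_, fun ι K hK S f hf μ => ?_, ?_⟩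
  · obtain ⟨s, -⟩ := μ.nonempty_of_mem μ.univ_mem
    exact absurd (hf s) (Set.notMem_empty _)
  · exact Set.mem_iInter.2 fun i =>
      hK i S f (fun s => Set.mem_iInter.1 (hf s) i) μ
  · intro K L hK hL S f hf μ
    by_cases h : {s | f s ∈ K} ∈ μ
    · exact Or.inl (ultra_mem hK f μ h fun s hs => hs)
    · refine Or.inr (ultra_mem hL f μ ((μ.compl_mem_iff_notMem).2 h) ?_)
      intro s hs
      exact (hf s).resolve_left hs
end

section
/- Let P be a complete lattice and φ : P → Prop a monotone map (p ≤ q implies φ p → φ q). Then φ is a left ultrafunctor to the two-element ultraposet, i.e. for every type S, every f : S → P, and every μ : Ultrafilter S, φ (⨆ A ∈ μ, ⨅ s ∈ A, f s) implies {s | φ (f s)} ∈ μ, if and only if the set {p | ¬ φ p} is canonically closed. -/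
universe u

/-- A monotone map from a complete lattice to `Prop` is a left ultrafunctor to
the two-element ultraposet iff the preimage of `False` is canonically closed. -/
theorem leftUltrafunctor_to_two_iff {P : Type u} [CompleteLattice P]
    (φ : P → Prop) (hφ : ∀ p q : P, p ≤ q → φ p → φ q) :
    (∀ (S : Type u) (f : S → P) (μ : Ultrafilter S),
        φ (⨆ A ∈ μ, ⨅ s ∈ A, f s) → {s | φ (f s)} ∈ μ) ↔
      CanonicallyClosed {p : P | ¬ φ p} := by
  constructor
  · intro H S f hf μ h
    have hmem := H S f μ h
    have hempty : ({s | φ (f s)} : Set S) = ∅ := by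
      ext s; simpa using hf s
    rw [hempty] at hmem
    exact Filter.empty_notMem (μ : Filter S) hmem
  · intro H S f μ h
    by_contra hc
    have hA : {s | ¬ φ (f s)} ∈ μ := Ultrafilter.compl_mem_iff_notMem.2 hc
    set T := {s : S // ¬ φ (f s)} with hT
    have hrange : Set.range (Subtype.val : T → S) ∈ μ := by
      rwa [Subtype.range_coe_subtype]
    let ν : Ultrafilter T := μ.comap Subtype.val_injective hrange
    have hup : (⨆ A ∈ μ, ⨅ s ∈ A, f s) ≤ ⨆ B ∈ ν, ⨅ t ∈ B, f t.val := by
      refine iSup₂_le fun A hAμ => ?_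
      have hB : (Subtype.val ⁻¹' A : Set T) ∈ ν := by
        exact Filter.preimage_mem_comap hAμ
      refine le_trans ?_ (le_iSup₂ (Subtype.val ⁻¹' A : Set T) hB)
      exact le_iInf₂ fun t ht => iInf₂_le t.val ht
    have hclosed := H T (fun t => f t.val) (fun t => t.prop) ν
    exact hclosed (hφ _ _ hup h)
end

section
/- Let P be a complete lattice and φ : P → Prop a monotone map (p ≤ q implies φ p → φ q). Then φ is a right ultrafunctor to the two-element ultraposet, i.e. for every type S, every f : S → P, and every μ : Ultrafilter S, {s | φ (f s)} ∈ μ implies φ (⨆ A ∈ μ, ⨅ s ∈ A, f s), if and only if the set {p | φ p} is canonically closed. -/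
universe u

/-- A monotone map from a complete lattice to `Prop` is a right ultrafunctor to
the two-element ultraposet iff the preimage of `True` is canonically closed. -/
theorem rightUltrafunctor_to_two_iff {P : Type u} [CompleteLattice P]
    (φ : P → Prop) (hφ : ∀ p q : P, p ≤ q → φ p → φ q) :
    (∀ (S : Type u) (f : S → P) (μ : Ultrafilter S),
        {s | φ (f s)} ∈ μ → φ (⨆ A ∈ μ, ⨅ s ∈ A, f s)) ↔
      CanonicallyClosed {p : P | φ p} := by
  constructor
  · intro h S f hf μ
    exact h S f μ (Filter.mem_of_superset Filter.univ_mem fun s _ => hf s)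
  · intro h S f μ hmem
    set T := {s : S | φ (f s)} with hT
    have hinj : Function.Injective (Subtype.val : T → S) := Subtype.val_injective
    have hrange : Set.range (Subtype.val : T → S) ∈ μ := by
      rwa [Subtype.range_val]
    let ν := μ.comap hinj hrange
    have key := h T (fun t => f t.1) (fun t => t.2) ν
    refine hφ _ _ ?_ key
    refine iSup₂_le fun A hA => ?_
    have hAmem : (Subtype.val '' A : Set S) ∈ μ := (Ultrafilter.mem_comap μ hinj hrange).mp hA
    refine le_trans ?_ (le_iSup₂ (Subtype.val '' A) hAmem)
    refine le_iInf₂ fun s hs => ?_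
    obtain ⟨t, ht, rfl⟩ := hs
    exact iInf₂_le t ht
end

section
/- Let P and Q be complete lattices and φ : P → Q a monotone map that is a left ultrafunctor for the canonical ultrastructures: for every type S, every f : S → P, and every μ : Ultrafilter S, φ (⨆ A ∈ μ, ⨅ s ∈ A, f s) ≤ ⨆ A ∈ μ, ⨅ s ∈ A, φ (f s). If L ⊆ Q is canonically closed and is a lower set (IsLowerSet L), then φ ⁻¹' L is canonically closed and is a lower set in P. -/
universe u

/-- The preimage of a canonically closed lower set under a monotone left
ultrafunctor between complete lattices is a canonically closed lower set. -/
theorem leftUltrafunctor_preimage_closed_lowerSet {P Q : Type u}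
    [CompleteLattice P] [CompleteLattice Q] (φ : P → Q) (hmono : Monotone φ)
    (hleft : ∀ (S : Type u) (f : S → P) (μ : Ultrafilter S),
      φ (⨆ A ∈ μ, ⨅ s ∈ A, f s) ≤ ⨆ A ∈ μ, ⨅ s ∈ A, φ (f s))
    (L : Set Q) (hL : CanonicallyClosed L) (hlow : IsLowerSet L) :
    CanonicallyClosed (φ ⁻¹' L) ∧ IsLowerSet (φ ⁻¹' L) := by
  constructor
  · intro S f hf μ
    exact hlow (hleft S f μ) (hL S (fun s => φ (f s)) hf μ)
  · intro a b hab ha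
    exact hlow (hmono hab) ha
end

section
/- Let P and Q be complete lattices and φ : P → Q a monotone map that is an ultrafunctor for the canonical ultrastructures: for every type S, every f : S → P, and every μ : Ultrafilter S, φ (⨆ A ∈ μ, ⨅ s ∈ A, f s) = ⨆ A ∈ μ, ⨅ s ∈ A, φ (f s). Then φ is closed and continuous for the topologies of canonically closed sets: (a) for every canonically closed L ⊆ Q, the preimage φ ⁻¹' L is canonically closed in P; (b) for every canonically closed K ⊆ P, the image φ '' K is canonically closed in Q. -/
universe u

/-- A monotone ultrafunctor between complete lattices (with canonical
ultrastructures) is closed and continuous for the topologies of canonically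
closed sets. -/
theorem ultrafunctor_closed_continuous {P Q : Type u}
    [CompleteLattice P] [CompleteLattice Q] (φ : P → Q) (hmono : Monotone φ)
    (hult : ∀ (S : Type u) (f : S → P) (μ : Ultrafilter S),
      φ (⨆ A ∈ μ, ⨅ s ∈ A, f s) = ⨆ A ∈ μ, ⨅ s ∈ A, φ (f s)) :
    (∀ L : Set Q, CanonicallyClosed L → CanonicallyClosed (φ ⁻¹' L)) ∧
    (∀ K : Set P, CanonicallyClosed K → CanonicallyClosed (φ '' K)) := by
  constructor
  · intro L hL S f hf μ
    have : φ (⨆ A ∈ μ, ⨅ s ∈ A, f s) ∈ L := by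
      rw [hult S f μ]
      exact hL S (fun s => φ (f s)) hf μ
    exact this
  · intro K hK S f hf μ
    choose g hgK hgφ using hf
    refine ⟨⨆ A ∈ μ, ⨅ s ∈ A, g s, hK S g hgK μ, ?_⟩
    rw [hult S g μ]
    simp only [hgφ]
end

section
/- Let D be a distributive lattice with ⊤ and ⊥, and let K ⊆ Spec D be ultraproduct-closed and up-closed. If x ∈ Spec D does not lie in K, then there exists p ∈ D such that p ∈ y for every y ∈ K (i.e. K ⊆ B_p) and p ∉ x. -/
universe u v

/-- The set of prime ideals of a bounded distributive lattice `D`. -/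
def Spec (D : Type u) [DistribLattice D] [BoundedOrder D] : Set (Order.Ideal D) :=
  {x | x.IsPrime}

/-- `K` is ultraproduct-closed: whenever `f` is a family of ideals valued in
`K` and `J` is the ultraproduct of `f` along the ultrafilter `μ`
(characterised by `p ∈ J ↔ {s | p ∈ f s} ∈ μ`), then `J` belongs to `K`. -/
def UltraClosed (D : Type u) [DistribLattice D] [BoundedOrder D]
    (K : Set (Order.Ideal D)) : Prop :=
  ∀ (S : Type u) (f : S → Order.Ideal D) (μ : Ultrafilter S) (J : Order.Ideal D),
    (∀ s, f s ∈ K) → (∀ p : D, p ∈ J ↔ {s | p ∈ f s} ∈ μ) → J ∈ K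

/-- `K` is up-closed in `Spec D`. -/
def UpClosed (D : Type u) [DistribLattice D] [BoundedOrder D]
    (K : Set (Order.Ideal D)) : Prop :=
  ∀ x ∈ K, ∀ y ∈ Spec D, x ≤ y → y ∈ K

/-- `K` is down-closed in `Spec D`. -/
def DownClosed (D : Type u) [DistribLattice D] [BoundedOrder D]
    (K : Set (Order.Ideal D)) : Prop :=
  ∀ x ∈ K, ∀ y ∈ Spec D, y ≤ x → y ∈ K

/-- Separation of a point of `Spec D` from an ultraproduct-closed up-closed
subset by a primitive set `B_p`. -/
theorem separation_from_closed_upset {D : Type u} [DistribLattice D] [BoundedOrder D]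
    (K : Set (Order.Ideal D)) (hKsub : K ⊆ Spec D)
    (hcl : UltraClosed D K) (hup : UpClosed D K)
    (x : Order.Ideal D) (hx : x ∈ Spec D) (hxK : x ∉ K) :
    ∃ p : D, (∀ y ∈ K, p ∈ y) ∧ p ∉ x := by
  by_contra h
  push_neg at h
  -- h : ∀ p, (∀ y ∈ K, p ∈ y) → p ∈ x
  classical
  have hx' : x.IsPrime := hx
  -- index type
  let S : Type u := {F : Finset D // ∀ p ∈ F, p ∉ x}
  have hinf : ∀ F : S, F.1.inf id ∉ x := by
    rintro ⟨F, hF⟩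
    induction F using Finset.induction_on with
    | empty =>
      simpa using hx'.toIsProper.top_notMem
    | @insert a s hmem ih =>
      rw [Finset.inf_insert]
      intro hc
      rcases hx'.mem_or_mem hc with h1 | h1
      · exact hF a (Finset.mem_insert_self a s) h1
      · exact ih (fun p hp => hF p (Finset.mem_insert_of_mem hp)) h1
  have hsel : ∀ F : S, ∃ y ∈ K, F.1.inf id ∉ y := by
    intro F
    by_contra hc
    push_neg at hc
    exact hinf F (h _ hc)
  choose g hgK hg using hsel
  have hgp : ∀ F : S, ∀ p ∈ F.1, p ∉ g F := fun F p hp hpg =>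
    hg F ((g F).lower (Finset.inf_le hp) hpg)
  -- directed order on S
  haveI : Nonempty S := ⟨⟨∅, by simp⟩⟩
  haveI : IsDirected S (· ≤ ·) := ⟨by
    rintro ⟨F, hF⟩ ⟨G, hG⟩
    refine ⟨⟨F ∪ G, ?_⟩, ?_, ?_⟩
    · intro p hp; rcases Finset.mem_union.1 hp with h1 | h1
      · exact hF p h1
      · exact hG p h1
    · exact Finset.subset_union_left
    · exact Finset.subset_union_right⟩
  haveI : (Filter.atTop : Filter S).NeBot := Filter.atTop_neBot
  let μ : Ultrafilter S := Ultrafilter.of Filter.atTop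
  have hμ : ∀ s ∈ (Filter.atTop : Filter S), s ∈ μ := fun s hs => Ultrafilter.of_le _ hs
  have hA : ∀ p : D, p ∉ x → {F : S | p ∈ F.1} ∈ μ := by
    intro p hp
    apply hμ
    refine Filter.mem_atTop_sets.2 ⟨⟨{p}, by simpa using hp⟩, ?_⟩
    intro b hb
    exact hb (Finset.mem_singleton_self p)
  let J : Order.Ideal D :=
    { carrier := {p : D | {F : S | p ∈ g F} ∈ μ}
      lower' := fun p q hqp hp => μ.toFilter.mem_of_superset hp
        (fun F hF => (g F).lower hqp hF)
      nonempty' := ⟨⊥, by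
        have : {F : S | (⊥ : D) ∈ g F} = Set.univ := by
          ext F; simp [Order.Ideal.bot_mem]
        rw [show ((⊥:D) ∈ {p : D | {F : S | p ∈ g F} ∈ μ}) = ({F : S | (⊥ : D) ∈ g F} ∈ μ) from rfl, this]
        exact Filter.univ_mem⟩
      directed' := by
        intro p hp q hq
        refine ⟨p ⊔ q, ?_, le_sup_left, le_sup_right⟩
        exact μ.toFilter.mem_of_superset (Filter.inter_mem hp hq)
          (fun F hF => Order.Ideal.sup_mem hF.1 hF.2) }
  have hJ : ∀ p : D, p ∈ J ↔ {s : S | p ∈ g s} ∈ μ := fun p => Iff.rfl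
  have hJK : J ∈ K := hcl S g μ J hgK hJ
  have hJx : J ≤ x := by
    intro p hp
    by_contra hpx
    have h1 : {F : S | p ∈ F.1} ∈ μ := hA p hpx
    have h2 : {F : S | p ∈ g F} ∈ μ := (hJ p).1 hp
    have h3 : ({F : S | p ∈ g F} ∩ {F : S | p ∈ F.1}).Nonempty :=
      Filter.nonempty_of_mem (Filter.inter_mem h2 h1)
    obtain ⟨F, hF1, hF2⟩ := h3
    exact hgp F p hF2 hF1
  exact hxK (hup J hJK x hx hJx)
end

section
/- Let D be a distributive lattice with ⊤ and ⊥, and let K ⊆ Spec D be ultraproduct-closed and up-closed. Then K is the intersection of the primitive sets containing it: K = {x ∈ Spec D | ∀ p : D, (∀ y ∈ K, p ∈ y) → p ∈ x}; equivalently, K = ⋂ over all p with K ⊆ B_p of B_p. -/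
universe u v

/-- Every ultraproduct-closed up-closed subset of `Spec D` is the intersection
of the primitive sets `B_p` containing it. -/
theorem closed_upset_eq_iInter_primitive {D : Type u} [DistribLattice D] [BoundedOrder D]
    (K : Set (Order.Ideal D)) (hKsub : K ⊆ Spec D)
    (hcl : UltraClosed D K) (hup : UpClosed D K) :
    K = {x | x ∈ Spec D ∧ ∀ p : D, (∀ y ∈ K, p ∈ y) → p ∈ x} := by
  ext x
  simp only [Set.mem_setOf_eq]
  constructor
  · intro hx
    exact ⟨hKsub hx, fun p hp => hp x hx⟩
  · rintro ⟨hxS, hx⟩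
    classical
    have hprime : x.IsPrime := hxS
    have hSne : Nonempty {p : D // p ∉ x} := by
      by_contra h
      exact hprime.toIsProper.top_notMem
        (by by_contra h'; exact h ⟨⟨⊤, h'⟩⟩)
    set S := {p : D // p ∉ x} with hSdef
    have hchoice : ∀ p : S, ∃ y, y ∈ K ∧ (p : D) ∉ y := by
      intro p
      by_contra h
      push_neg at h
      exact p.2 (hx p (fun y hy => h y hy))
    choose f hfK hf using hchoice
    let A : S → Set S := fun q => {p : S | (q : D) ∉ f p}
    have hAsub : ∀ q1 q2 : D, (h1 : q1 ∉ x) → (h2 : q2 ∉ x) →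
        (hm : q1 ⊓ q2 ∉ x) → A ⟨q1 ⊓ q2, hm⟩ ⊆ A ⟨q1, h1⟩ ∩ A ⟨q2, h2⟩ := by
      intro q1 q2 h1 h2 hm p hp
      constructor
      · exact fun hmem => hp ((f p).lower inf_le_left hmem)
      · exact fun hmem => hp ((f p).lower inf_le_right hmem)
    have hdir : Directed (· ≥ ·) (fun q : S => Filter.principal (A q)) := by
      rintro ⟨q1, h1⟩ ⟨q2, h2⟩
      have hm : q1 ⊓ q2 ∉ x := fun h => (hprime.mem_or_mem h).elim h1 h2
      refine ⟨⟨q1 ⊓ q2, hm⟩, ?_, ?_⟩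
      · exact Filter.principal_mono.2 (fun p hp => (hAsub q1 q2 h1 h2 hm hp).1)
      · exact Filter.principal_mono.2 (fun p hp => (hAsub q1 q2 h1 h2 hm hp).2)
    have hne : ∀ q : S, (Filter.principal (A q)).NeBot := by
      intro q
      exact Filter.principal_neBot_iff.2 ⟨q, hf q⟩
    have hFne : (⨅ q : S, Filter.principal (A q)).NeBot :=
      Filter.iInf_neBot_of_directed hdir hne
    let μ : Ultrafilter S := @Ultrafilter.of S (⨅ q : S, Filter.principal (A q)) hFne
    have hμA : ∀ q : S, A q ∈ μ := by
      intro q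
      exact (Ultrafilter.of_le _) (iInf_le (fun q : S => Filter.principal (A q)) q
        (Filter.mem_principal_self _))
    let J : Order.Ideal D :=
      { carrier := {q : D | {p : S | q ∈ f p} ∈ μ}
        lower' := by
          intro a b hba ha
          exact μ.toFilter.mem_of_superset ha (fun p hp => (f p).lower hba hp)
        nonempty' := ⟨⊥, by
          have : {p : S | (⊥ : D) ∈ f p} = Set.univ := by
            ext p; simp [Order.Ideal.bot_mem]
          simp only [Set.mem_setOf_eq, this]
          exact Filter.univ_mem⟩
        directed' := by
          intro a ha b hb
          refine ⟨a ⊔ b, ?_, le_sup_left, le_sup_right⟩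
          exact μ.toFilter.mem_of_superset (Filter.inter_mem ha hb)
            (fun p hp => Order.Ideal.sup_mem hp.1 hp.2) }
    have hJK : J ∈ K := hcl S f μ J hfK (fun p => Iff.rfl)
    have hJx : J ≤ x := by
      intro q hq
      by_contra hqx
      have h1 : {p : S | q ∈ f p} ∈ μ := hq
      have h2 : A ⟨q, hqx⟩ ∈ μ := hμA ⟨q, hqx⟩
      have : ({p : S | q ∈ f p} ∩ A ⟨q, hqx⟩ : Set S) = ∅ := by
        ext p; simp only [Set.mem_inter_iff, Set.mem_setOf_eq, Set.mem_empty_iff_false,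
          iff_false, not_and]
        exact fun h h' => h' h
      exact μ.toFilter.empty_notMem (this ▸ Filter.inter_mem h1 h2)
    exact hup J hJK x hxS hJx
end

section
/- (Reconstruction of the ideal lattice.) Let D be a distributive lattice with ⊤ and ⊥. The assignments I ↦ K_I := {x ∈ Spec D | I ≤ x} and K ↦ I_K := {p : D | ∀ x ∈ K, p ∈ x} define mutually inverse, inclusion-reversing bijections between the ideals of D (Order.Ideal D) and the subsets of Spec D that are ultraproduct-closed and up-closed. In particular: K_I is ultraproduct-closed and up-closed for every ideal I; I_K is an ideal for every K; I_{K_I} = I for every ideal I; K_{I_K} = K for every ultraproduct-closed up-closed K; and I ≤ J ↔ K_J ⊆ K_I. -/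
universe u v

/-- `K_I`: the set of prime ideals containing the ideal `I`. -/
def specK {D : Type u} [DistribLattice D] [BoundedOrder D]
    (I : Order.Ideal D) : Set (Order.Ideal D) :=
  {x | x ∈ Spec D ∧ I ≤ x}

/-- `I_K`: the set of elements of `D` belonging to every member of `K`. -/
def idealOf {D : Type u} [DistribLattice D] [BoundedOrder D]
    (K : Set (Order.Ideal D)) : Set D :=
  {p | ∀ x ∈ K, p ∈ x}

section Aux
variable {D : Type u} [DistribLattice D] [BoundedOrder D]

lemma ultraprod_mem_spec {S : Type u} (f : S → Order.Ideal D) (μ : Ultrafilter S)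
    (J : Order.Ideal D) (hf : ∀ s, f s ∈ Spec D)
    (hJ : ∀ p : D, p ∈ J ↔ {s | p ∈ f s} ∈ μ) : J ∈ Spec D := by
  have htop : (⊤ : D) ∉ J := by
    rw [hJ]
    have h1 : {s | (⊤ : D) ∈ f s} = ∅ :=
      Set.eq_empty_of_forall_notMem fun s hs => (hf s).toIsProper.top_notMem hs
    rw [h1]
    exact fun h => (Filter.empty_notMem (μ : Filter S)) h
  haveI : J.IsProper := Order.Ideal.isProper_of_notMem htop
  refine Order.Ideal.IsPrime.of_mem_or_mem ?_
  intro a b hab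
  rw [hJ] at hab
  have hsub : {s | a ⊓ b ∈ f s} ⊆ {s | a ∈ f s} ∪ {s | b ∈ f s} :=
    fun s hs => (hf s).mem_or_mem hs
  have := Filter.mem_of_superset hab hsub
  rcases Ultrafilter.union_mem_iff.mp this with h | h
  · exact Or.inl ((hJ a).mpr h)
  · exact Or.inr ((hJ b).mpr h)

lemma isIdeal_idealOf (K : Set (Order.Ideal D)) : Order.IsIdeal (idealOf K) := by
  refine ⟨?_, ⟨⊥, fun x _ => x.bot_mem⟩, ?_⟩
  · intro a b hba ha x hx
    exact x.lower hba (ha x hx)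
  · intro a ha b hb
    exact ⟨a ⊔ b, fun x hx => Order.Ideal.sup_mem (ha x hx) (hb x hx), le_sup_left, le_sup_right⟩

lemma idealOf_specK (I : Order.Ideal D) : idealOf (specK I) = (I : Set D) := by
  ext p
  constructor
  · intro hp
    by_contra hpI
    have hdisj : Disjoint ((Order.PFilter.principal p : Order.PFilter D) : Set D) (I : Set D) := by
      rw [Set.disjoint_left]
      intro q hq hqI
      exact hpI (I.lower (Order.PFilter.mem_principal.mp hq) hqI)
    obtain ⟨Jp, hprime, hIJ, hd⟩ := DistribLattice.prime_ideal_of_disjoint_filter_ideal hdisj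
    have hpJp : p ∈ Jp := hp Jp ⟨hprime, hIJ⟩
    exact Set.disjoint_left.mp hd (Order.PFilter.mem_principal.mpr le_rfl) hpJp
  · intro hp x hx
    exact hx.2 hp

lemma finset_inf_notMem {x : Order.Ideal D} (hx : x.IsPrime) (B : Finset D)
    (hB : ∀ p ∈ B, p ∉ x) : B.inf id ∉ x := by
  classical
  induction B using Finset.induction with
  | empty => simpa using hx.toIsProper.top_notMem
  | @insert a B' ha ih =>
    rw [Finset.inf_insert]
    intro hmem
    rcases hx.mem_or_mem hmem with h | h
    · exact hB a (Finset.mem_insert_self a B') h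
    · exact ih (fun p hp => hB p (Finset.mem_insert_of_mem hp)) h

end Aux

/-- Reconstruction of the ideal lattice: `I ↦ K_I` and `K ↦ I_K` are mutually
inverse, inclusion-reversing bijections between ideals of `D` and
ultraproduct-closed up-closed subsets of `Spec D`. -/
theorem ideal_lattice_reconstruction {D : Type u} [DistribLattice D] [BoundedOrder D] :
    (∀ I : Order.Ideal D,
      specK I ⊆ Spec D ∧ UltraClosed D (specK I) ∧ UpClosed D (specK I)) ∧
    (∀ K : Set (Order.Ideal D), K ⊆ Spec D →
      ∃ J : Order.Ideal D, (J : Set D) = idealOf K) ∧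
    (∀ I : Order.Ideal D, idealOf (specK I) = (I : Set D)) ∧
    (∀ K : Set (Order.Ideal D), K ⊆ Spec D → UltraClosed D K → UpClosed D K →
      ∀ J : Order.Ideal D, (J : Set D) = idealOf K → specK J = K) ∧
    (∀ I J : Order.Ideal D, I ≤ J ↔ specK J ⊆ specK I) := by
  classical
  refine ⟨?_, ?_, idealOf_specK, ?_, ?_⟩
  · -- part 1
    intro I
    refine ⟨fun x hx => hx.1, ?_, ?_⟩
    · intro S f μ J hf hJ
      refine ⟨ultraprod_mem_spec f μ J (fun s => (hf s).1) hJ, ?_⟩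
      intro p hp
      refine (hJ p).mpr (Filter.mem_of_superset Filter.univ_mem ?_)
      intro s _
      exact (hf s).2 hp
    · intro x hx y hy hxy
      exact ⟨hy, le_trans hx.2 hxy⟩
  · -- part 2
    intro K _
    exact ⟨(isIdeal_idealOf K).toIdeal, rfl⟩
  · -- part 4
    intro K hK hUC hUpC J hJ
    ext x
    constructor
    · rintro ⟨hxSpec, hJx⟩
      rcases Set.eq_empty_or_nonempty K with hKe | ⟨y₀, hy₀⟩
      · exfalso
        have : (⊤ : D) ∈ J := by
          rw [← SetLike.mem_coe, hJ, hKe]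
          intro z hz
          exact absurd hz (Set.notMem_empty z)
        exact hxSpec.toIsProper.top_notMem (hJx this)
      · -- main case
        have hIK : idealOf K ⊆ (x : Set D) := by
          rw [← hJ]; exact hJx
        -- for each finite set B, choose y ∈ K avoiding the inf of B ∩ xᶜ
        have hchoice : ∀ B : Finset D, ∃ y, y ∈ K ∧ (B.filter (fun p => p ∉ x)).inf id ∉ y := by
          intro B
          have hb : (B.filter (fun p => p ∉ x)).inf id ∉ x :=
            finset_inf_notMem hxSpec _ (fun p hp => (Finset.mem_filter.mp hp).2)
          have : (B.filter (fun p => p ∉ x)).inf id ∉ idealOf K := fun h => hb (hIK h)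
          simp only [idealOf, Set.mem_setOf_eq, not_forall] at this
          obtain ⟨y, hy, hny⟩ := this
          exact ⟨y, hy, hny⟩
        choose f hfK hfav using hchoice
        haveI : Nonempty (Finset D) := ⟨∅⟩
        let μ : Ultrafilter (Finset D) := Ultrafilter.of Filter.atTop
        have hμ : ∀ p : D, {B : Finset D | p ∈ B} ∈ μ := by
          intro p
          refine Ultrafilter.of_le Filter.atTop ?_
          have := Filter.eventually_ge_atTop ({p} : Finset D)
          refine Filter.mem_of_superset this ?_
          intro B hB
          exact Finset.singleton_subset_iff.mp hB
        have hiJ' : Order.IsIdeal {p : D | {B : Finset D | p ∈ f B} ∈ μ} := by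
          refine ⟨?_, ⟨⊥, ?_⟩, ?_⟩
          · intro a b hba ha
            exact Filter.mem_of_superset ha (fun B hB => (f B).lower hba hB)
          · exact Filter.mem_of_superset Filter.univ_mem (fun B _ => (f B).bot_mem)
          · intro a ha b hb
            refine ⟨a ⊔ b, ?_, le_sup_left, le_sup_right⟩
            exact Filter.mem_of_superset (Filter.inter_mem ha hb)
              (fun B hB => Order.Ideal.sup_mem hB.1 hB.2)
        set J' := hiJ'.toIdeal with hJ'def
        have hchar : ∀ p : D, p ∈ J' ↔ {B : Finset D | p ∈ f B} ∈ μ := fun p => Iff.rfl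
        have hJ'K : J' ∈ K := hUC (Finset D) f μ J' hfK hchar
        have hJ'x : J' ≤ x := by
          intro p hp
          by_contra hpx
          have h1 : {B : Finset D | p ∈ B} ⊆ {B : Finset D | p ∈ f B}ᶜ := by
            intro B hB
            intro hpf
            have hple : (B.filter (fun q => q ∉ x)).inf id ≤ p :=
              Finset.inf_le (Finset.mem_filter.mpr ⟨hB, hpx⟩)
            exact hfav B ((f B).lower hple hpf)
          have h2 : {B : Finset D | p ∈ f B}ᶜ ∈ μ := Filter.mem_of_superset (hμ p) h1
          exact (Ultrafilter.compl_mem_iff_notMem.mp h2) ((hchar p).mp hp)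
        exact hUpC J' hJ'K x hxSpec hJ'x
    · intro hxK
      refine ⟨hK hxK, ?_⟩
      intro p hp
      have : p ∈ idealOf K := by rw [← hJ]; exact hp
      exact this x hxK
  · -- part 5
    intro I J
    constructor
    · intro hIJ x hx
      exact ⟨hx.1, le_trans hIJ hx.2⟩
    · intro h p hp
      have : p ∈ idealOf (specK J) := by
        intro x hx
        have hxI : x ∈ specK I := h hx
        exact hxI.2 hp
      rw [idealOf_specK J] at this
      exact this
end

section
/- Let D be a distributive lattice with ⊤ and ⊥, and let K ⊆ Spec D be ultraproduct-closed and up-closed, with complement Spec D \ K also ultraproduct-closed. Let (K_i)_{i : ι} be a nonempty codirected family of ultraproduct-closed up-closed subsets of Spec D (for all i j there exists k with K_k ⊆ K_i ∩ K_j). If K = ⋂ i, K_i, then K = K_i for some i. (Such K is a finite element of the lattice of closed down-sets.) -/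
universe u v

/-- A complemented closed down-set is a finite element: if an
ultraproduct-closed up-closed `K` with ultraproduct-closed complement is the
intersection of a nonempty codirected family of ultraproduct-closed up-closed
subsets, then it equals one of them. -/
theorem complemented_closed_is_finite {D : Type u} [DistribLattice D] [BoundedOrder D]
    (K : Set (Order.Ideal D)) (hKsub : K ⊆ Spec D)
    (hcl : UltraClosed D K) (hup : UpClosed D K)
    (hcompl : UltraClosed D (Spec D \ K))
    {ι : Type v} [Nonempty ι] (Ks : ι → Set (Order.Ideal D))
    (hKssub : ∀ i, Ks i ⊆ Spec D)
    (hKscl : ∀ i, UltraClosed D (Ks i)) (hKsup : ∀ i, UpClosed D (Ks i))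
    (hcodir : ∀ i j, ∃ k, Ks k ⊆ Ks i ∩ Ks j)
    (hEq : K = ⋂ i, Ks i) :
    ∃ i, K = Ks i := by
  classical
  by_contra hcon
  push_neg at hcon
  have hKsubKs : ∀ i, K ⊆ Ks i := fun i => by
    rw [hEq]; exact Set.iInter_subset Ks i
  have hwit : ∀ i, ∃ x, x ∈ Ks i ∧ x ∉ K := by
    intro i
    by_contra h
    push_neg at h
    exact hcon i (Set.Subset.antisymm (hKsubKs i) h)
  choose f hf1 hf2 using hwit
  set A : ι → Set ι := fun i => {j | Ks j ⊆ Ks i} with hA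
  have hAne : ∀ i, (A i).Nonempty := fun i => by
    obtain ⟨k, hk⟩ := hcodir i i
    exact ⟨k, fun x hx => (hk hx).1⟩
  have hAdir : ∀ i j, ∃ k, A k ⊆ A i ∩ A j := by
    intro i j
    obtain ⟨k, hk⟩ := hcodir i j
    exact ⟨k, fun m hm => ⟨fun x hx => (hk (hm hx)).1, fun x hx => (hk (hm hx)).2⟩⟩
  have hdir : Directed (· ≥ ·) (fun i => Filter.principal (A i)) := by
    intro i j
    obtain ⟨k, hk⟩ := hAdir i j
    exact ⟨k, Filter.principal_mono.2 (fun x hx => (hk hx).1),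
      Filter.principal_mono.2 (fun x hx => (hk hx).2)⟩
  haveI hne : (⨅ i, Filter.principal (A i)).NeBot := by
    apply Filter.iInf_neBot_of_directed hdir
    intro i
    exact Filter.principal_neBot_iff.2 (hAne i)
  let μ : Ultrafilter ι := Ultrafilter.of (⨅ i, Filter.principal (A i))
  have hAmem : ∀ i, A i ∈ μ := fun i =>
    (Ultrafilter.of_le _) (Filter.mem_iInf_of_mem i (Filter.mem_principal_self _))
  have congrμ : ∀ (i : ι) (X Y : Set ι), X ∩ A i = Y ∩ A i → (X ∈ μ ↔ Y ∈ μ) := by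
    intro i X Y h
    constructor <;> intro hX
    · exact μ.toFilter.sets_of_superset (by exact h ▸ Filter.inter_mem hX (hAmem i))
        Set.inter_subset_left
    · exact μ.toFilter.sets_of_superset (by exact h ▸ Filter.inter_mem hX (hAmem i))
        Set.inter_subset_left
  -- construct the ultraproduct ideal J
  have hbot : {j | (⊥ : D) ∈ f j} ∈ μ := by
    have : {j | (⊥ : D) ∈ f j} = Set.univ := by
      ext j; simp [Order.Ideal.bot_mem]
    rw [this]; exact Filter.univ_mem
  have hlower : IsLowerSet {p : D | {j | p ∈ f j} ∈ μ} := by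
    intro a b hba ha
    exact μ.toFilter.sets_of_superset ha (fun j hj => (f j).lower hba hj)
  have hdirJ : DirectedOn (· ≤ ·) {p : D | {j | p ∈ f j} ∈ μ} := by
    intro p hp q hq
    refine ⟨p ⊔ q, ?_, le_sup_left, le_sup_right⟩
    exact μ.toFilter.sets_of_superset (Filter.inter_mem hp hq)
      (fun j hj => Order.Ideal.sup_mem hj.1 hj.2)
  let J : Order.Ideal D := ⟨⟨{p : D | {j | p ∈ f j} ∈ μ}, hlower⟩, ⟨⊥, hbot⟩, hdirJ⟩
  have hJmem : ∀ p : D, p ∈ J ↔ {j | p ∈ f j} ∈ μ := fun p => Iff.rfl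
  -- J ∈ Ks i for every i
  have hJK : ∀ i, J ∈ Ks i := by
    intro i
    let g : ι → ↥(Ks i) := fun j => if h : f j ∈ Ks i then ⟨f j, h⟩ else ⟨f i, hf1 i⟩
    refine hKscl i ↥(Ks i) Subtype.val (μ.map g) J (fun s => s.2) ?_
    intro p
    rw [hJmem, Ultrafilter.mem_map]
    have hpre : (Subtype.val ∘ g) ⁻¹' {x : Order.Ideal D | p ∈ x} =
        g ⁻¹' {s : ↥(Ks i) | p ∈ (s : Order.Ideal D)} := rfl
    have key : {j | p ∈ f j} ∩ A i =
        g ⁻¹' {s : ↥(Ks i) | p ∈ (s : Order.Ideal D)} ∩ A i := by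
      ext j
      simp only [Set.mem_inter_iff, Set.mem_setOf_eq, Set.mem_preimage]
      constructor
      · rintro ⟨h1, h2⟩
        have hmem : f j ∈ Ks i := h2 (hf1 j)
        refine ⟨?_, h2⟩
        simpa [g, hmem] using h1
      · rintro ⟨h1, h2⟩
        have hmem : f j ∈ Ks i := h2 (hf1 j)
        refine ⟨?_, h2⟩
        simpa [g, hmem] using h1
    exact (congrμ i _ _ key)
  have hJinK : J ∈ K := by
    rw [hEq]; exact Set.mem_iInter.2 hJK
  -- J ∈ Spec D \ K via the complement being ultraproduct-closed
  have hJnotK : J ∈ Spec D \ K := by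
    let g' : ι → ↥(Spec D \ K) := fun j => ⟨f j, ⟨hKssub j (hf1 j), hf2 j⟩⟩
    refine hcompl ↥(Spec D \ K) Subtype.val (μ.map g') J (fun s => s.2) ?_
    intro p
    rw [hJmem, Ultrafilter.mem_map]
    rfl
  exact hJnotK.2 hJinK
end

section
/- (Reconstruction of the distributive lattice.) Let D be a distributive lattice with ⊤ and ⊥. The map p ↦ B_p := {x ∈ Spec D | p ∈ x} is injective and order-reversing with p ≤ q ↔ B_q ⊆ B_p, each B_p is ultraproduct-closed and up-closed with complement Spec D \ B_p ultraproduct-closed and down-closed, and conversely every subset K ⊆ Spec D such that K is ultraproduct-closed and up-closed and Spec D \ K is ultraproduct-closed and down-closed equals B_p for a unique p ∈ D. Hence D is in order-reversing bijection with the complemented closed pairs of Spec D. -/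
universe u v

/-- The primitive set `B_p`: the prime ideals containing `p`. -/
def Bset {D : Type u} [DistribLattice D] [BoundedOrder D] (p : D) :
    Set (Order.Ideal D) :=
  {x | x ∈ Spec D ∧ p ∈ x}

section Aux

variable {D : Type u} [DistribLattice D] [BoundedOrder D]

/-- The ultraproduct of a family of ideals along an ultrafilter. -/
def uprod {S : Type u} (y : S → Order.Ideal D) (μ : Ultrafilter S) : Order.Ideal D :=
  Order.IsIdeal.toIdeal (I := {p : D | {s | p ∈ y s} ∈ μ})
    { IsLowerSet := fun p q hqp hp =>
        Filter.mem_of_superset hp (fun s hs => (y s).lower hqp hs)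
      Nonempty := ⟨⊥, by
        have : {s : S | (⊥ : D) ∈ y s} = Set.univ := by
          ext s; simp [Order.Ideal.bot_mem]
        simp only [Set.mem_setOf_eq, this]
        exact Filter.univ_mem⟩
      Directed := fun p hp q hq => ⟨p ⊔ q, by
        refine Filter.mem_of_superset (Filter.inter_mem hp hq) ?_
        rintro s ⟨h1, h2⟩
        exact Order.Ideal.sup_mem h1 h2, le_sup_left, le_sup_right⟩ }

lemma mem_uprod {S : Type u} {y : S → Order.Ideal D} {μ : Ultrafilter S} {p : D} :
    p ∈ uprod y μ ↔ {s | p ∈ y s} ∈ μ := Iff.rfl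

/-- Łoś's theorem for prime ideals of distributive lattices. -/
lemma los {S : Type u} (f : S → Order.Ideal D) (μ : Ultrafilter S) (J : Order.Ideal D)
    (hf : ∀ s, (f s).IsPrime) (hJ : ∀ p : D, p ∈ J ↔ {s | p ∈ f s} ∈ μ) : J.IsPrime := by
  have hproper : Order.Ideal.IsProper J := by
    refine Order.Ideal.isProper_of_notMem (p := ⊤) ?_
    rw [hJ]
    have : {s : S | (⊤ : D) ∈ f s} = (∅ : Set S) := by
      ext s; simp [(hf s).toIsProper.top_notMem]
    rw [this]
    exact μ.empty_notMem
  exact @Order.Ideal.IsPrime.of_mem_or_mem _ _ _ hproper (fun {x y} hxy => by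
    rw [hJ] at hxy
    rw [hJ, hJ, ← Ultrafilter.union_mem_iff]
    exact Filter.mem_of_superset hxy (fun s hs => (hf s).mem_or_mem hs))

/-- Key compactness lemma: an ultraproduct-closed, up-closed set contains any prime
ideal all of whose "missing" elements are missed by some member of the set. -/
lemma mem_of_upClosed {K : Set (Order.Ideal D)} (hU : UltraClosed D K) (hUp : UpClosed D K)
    {x : Order.Ideal D} (hx : x ∈ Spec D)
    (h : ∀ q : D, q ∉ x → ∃ y ∈ K, q ∉ y) : x ∈ K := by
  classical
  have hxp : x.IsPrime := hx
  set S := {q : D // q ∉ x} with hS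
  have hSne : Nonempty S := ⟨⟨⊤, hxp.toIsProper.top_notMem⟩⟩
  choose y hyK hyn using fun s : S => h s.1 s.2
  set V : S → Set S := fun t => {s | s.1 ≤ t.1} with hV
  have hdir : Directed (· ≥ ·) (fun t => Filter.principal (V t)) := by
    intro t₁ t₂
    have hmem : t₁.1 ⊓ t₂.1 ∉ x := fun hin => by
      rcases hxp.mem_or_mem hin with h1 | h1
      · exact t₁.2 h1
      · exact t₂.2 h1
    refine ⟨⟨t₁.1 ⊓ t₂.1, hmem⟩, ?_, ?_⟩ <;>
      · simp only [ge_iff_le, Filter.le_principal_iff, Filter.mem_principal]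
        intro s hs
        exact le_trans hs (by simp)
  have hNB : ∀ t, Filter.NeBot (Filter.principal (V t)) := fun t =>
    Filter.principal_neBot_iff.2 ⟨t, le_refl _⟩
  have : Filter.NeBot (⨅ t, Filter.principal (V t)) :=
    Filter.iInf_neBot_of_directed' hdir hNB
  set μ := Ultrafilter.of (⨅ t, Filter.principal (V t)) with hμ
  have hVmem : ∀ t, V t ∈ μ := fun t =>
    Ultrafilter.of_le _ (Filter.mem_iInf_of_mem t (Filter.mem_principal_self _))
  set J := uprod y μ with hJ
  have hJK : J ∈ K := hU S y μ J hyK (fun p => Iff.rfl)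
  have hJx : J ≤ x := by
    intro r hr
    by_contra hrx
    have hsub : V ⟨r, hrx⟩ ⊆ {s | r ∈ y s}ᶜ := by
      intro s hs hmem
      exact hyn s ((y s).lower hs hmem)
    have : {s | r ∈ y s}ᶜ ∈ μ := Filter.mem_of_superset (hVmem _) hsub
    exact (Ultrafilter.compl_mem_iff_notMem.1 this) hr
  exact hUp J hJK x hx hJx

/-- Dual compactness lemma for down-closed sets. -/
lemma mem_of_downClosed {L : Set (Order.Ideal D)} (hU : UltraClosed D L) (hDn : DownClosed D L)
    {x : Order.Ideal D} (hx : x ∈ Spec D)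
    (h : ∀ p : D, p ∈ x → ∃ y ∈ L, p ∈ y) : x ∈ L := by
  classical
  set S := {p : D // p ∈ x} with hS
  have hSne : Nonempty S := ⟨⟨⊥, x.bot_mem⟩⟩
  choose y hyL hymem using fun s : S => h s.1 s.2
  set V : S → Set S := fun t => {s | t.1 ≤ s.1} with hV
  have hdir : Directed (· ≥ ·) (fun t => Filter.principal (V t)) := by
    intro t₁ t₂
    refine ⟨⟨t₁.1 ⊔ t₂.1, Order.Ideal.sup_mem t₁.2 t₂.2⟩, ?_, ?_⟩ <;>
      · simp only [ge_iff_le, Filter.le_principal_iff, Filter.mem_principal]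
        intro s hs
        exact le_trans (by simp) hs
  have hNB : ∀ t, Filter.NeBot (Filter.principal (V t)) := fun t =>
    Filter.principal_neBot_iff.2 ⟨t, le_refl _⟩
  have : Filter.NeBot (⨅ t, Filter.principal (V t)) :=
    Filter.iInf_neBot_of_directed' hdir hNB
  set μ := Ultrafilter.of (⨅ t, Filter.principal (V t)) with hμ
  have hVmem : ∀ t, V t ∈ μ := fun t =>
    Ultrafilter.of_le _ (Filter.mem_iInf_of_mem t (Filter.mem_principal_self _))
  set J := uprod y μ with hJ
  have hJL : J ∈ L := hU S y μ J hyL (fun p => Iff.rfl)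
  have hxJ : x ≤ J := by
    intro r hr
    have hsub : V ⟨r, hr⟩ ⊆ {s | r ∈ y s} := fun s hs => (y s).lower hs (hymem s)
    exact Filter.mem_of_superset (hVmem _) hsub
  exact hDn J hJL x hx hxJ

end Aux

/-- Reconstruction of the distributive lattice: `p ↦ B_p` is an injective,
order-reversing map whose image is exactly the complemented closed pairs of
`Spec D`. -/
theorem distributive_lattice_reconstruction {D : Type u} [DistribLattice D] [BoundedOrder D] :
    Function.Injective (Bset (D := D)) ∧
    (∀ p q : D, p ≤ q ↔ Bset q ⊆ Bset p) ∧
    (∀ p : D, Bset p ⊆ Spec D ∧ UltraClosed D (Bset p) ∧ UpClosed D (Bset p) ∧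
      UltraClosed D (Spec D \ Bset p) ∧ DownClosed D (Spec D \ Bset p)) ∧
    (∀ K : Set (Order.Ideal D), K ⊆ Spec D →
      UltraClosed D K → UpClosed D K →
      UltraClosed D (Spec D \ K) → DownClosed D (Spec D \ K) →
      ∃! p : D, K = Bset p) := by
  classical
  -- order-reversal
  have horder : ∀ p q : D, p ≤ q ↔ Bset q ⊆ Bset p := by
    intro p q
    constructor
    · intro hpq x hx
      exact ⟨hx.1, x.lower hpq hx.2⟩
    · intro hsub
      by_contra hpq
      -- separate: principal ideal of q disjoint from principal filter of p
      have hdisj : Disjoint ((Order.PFilter.principal p : Order.PFilter D) : Set D)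
          ((Order.Ideal.principal q : Order.Ideal D) : Set D) := by
        rw [Set.disjoint_left]
        intro r hr hr'
        exact hpq (le_trans hr hr')
      obtain ⟨J, hJprime, hJq, hJp⟩ :=
        DistribLattice.prime_ideal_of_disjoint_filter_ideal hdisj
      have hqJ : q ∈ J := hJq (Order.Ideal.mem_principal.2 le_rfl)
      have hpJ : p ∉ J := Set.disjoint_left.1 hJp (Order.PFilter.mem_principal.2 le_rfl)
      exact hpJ (hsub ⟨hJprime, hqJ⟩).2
  have hinj : Function.Injective (Bset (D := D)) := by
    intro p q h
    exact le_antisymm ((horder p q).2 (h ▸ le_rfl)) ((horder q p).2 (h ▸ le_rfl))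
  refine ⟨hinj, horder, ?_, ?_⟩
  · -- properties of Bset p
    intro p
    refine ⟨fun x hx => hx.1, ?_, ?_, ?_, ?_⟩
    · intro S f μ J hf hJ
      have hprime : J.IsPrime := los f μ J (fun s => (hf s).1) hJ
      have hp : p ∈ J := by
        rw [hJ]
        have : {s : S | p ∈ f s} = Set.univ := by
          ext s; simp [(hf s).2]
        rw [this]; exact Filter.univ_mem
      exact ⟨hprime, hp⟩
    · intro x hx y hy hxy
      exact ⟨hy, hxy hx.2⟩
    · intro S f μ J hf hJ
      have hprime : J.IsPrime := los f μ J (fun s => (hf s).1) hJ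
      refine ⟨hprime, fun hJB => ?_⟩
      have hp : p ∈ J := hJB.2
      rw [hJ] at hp
      have : {s : S | p ∈ f s} = (∅ : Set S) := by
        ext s
        simp only [Set.mem_setOf_eq, Set.mem_empty_iff_false, iff_false]
        exact fun hmem => (hf s).2 ⟨(hf s).1, hmem⟩
      rw [this] at hp
      exact μ.empty_notMem hp
    · intro x hx y hy hyx
      exact ⟨hy, fun hyB => hx.2 ⟨hx.1, hyx hyB.2⟩⟩
  · -- the converse
    intro K hKS hKU hKup hLU hLdn
    set L := Spec D \ K with hL
    set I : Set D := {p | ∀ y ∈ K, p ∈ y} with hI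
    set F : Set D := {p | ∀ y ∈ L, p ∉ y} with hF
    -- I is an ideal
    have hIideal : Order.IsIdeal I := by
      refine ⟨fun a b hba ha y hy => y.lower hba (ha y hy), ⟨⊥, fun y _ => y.bot_mem⟩,
        fun a ha b hb => ⟨a ⊔ b, fun y hy => Order.Ideal.sup_mem (ha y hy) (hb y hy),
          le_sup_left, le_sup_right⟩⟩
    -- F is a filter
    have hFfilter : Order.IsPFilter F := by
      refine Order.IsPFilter.of_def ⟨⊤, fun y hy => ?_⟩ ?_ ?_
      · exact (hy.1 : y.IsPrime).toIsProper.top_notMem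
      · intro a ha b hb
        refine ⟨a ⊓ b, fun y hy hmem => ?_, inf_le_left, inf_le_right⟩
        rcases (hy.1 : y.IsPrime).mem_or_mem hmem with h1 | h1
        · exact ha y hy h1
        · exact hb y hy h1
      · intro a b hab ha y hy hb
        exact ha y hy (y.lower hab hb)
    have key1 : ∀ x ∈ Spec D, I ⊆ (x : Set D) → x ∈ K := by
      intro x hx hIx
      refine mem_of_upClosed hKU hKup hx (fun q hq => ?_)
      by_contra h'
      push_neg at h'
      exact hq (hIx (fun y hy => h' y hy))
    have key2 : ∀ x ∈ Spec D, (∀ p : D, p ∈ x → p ∉ F) → x ∈ L := by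
      intro x hx hxF
      refine mem_of_downClosed hLU hLdn hx (fun p hp => ?_)
      have := hxF p hp
      rw [hF, Set.mem_setOf_eq] at this
      push_neg at this
      obtain ⟨y, hy1, hy2⟩ := this
      exact ⟨y, hy1, hy2⟩
    have hIF : (I ∩ F).Nonempty := by
      by_contra hem
      rw [Set.not_nonempty_iff_eq_empty] at hem
      have hdisj : Disjoint ((hFfilter.toPFilter : Order.PFilter D) : Set D)
          ((hIideal.toIdeal : Order.Ideal D) : Set D) := by
        rw [Set.disjoint_left]
        intro r hr hr'
        have hrF : r ∈ F := hr
        have hrI : r ∈ I := hr'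
        have : r ∈ I ∩ F := ⟨hrI, hrF⟩
        rw [hem] at this
        exact this
      obtain ⟨J, hJprime, hIJ, hJF⟩ :=
        DistribLattice.prime_ideal_of_disjoint_filter_ideal hdisj
      have hJK : J ∈ K := by
        refine key1 J hJprime (fun r hr => ?_)
        exact hIJ (show r ∈ hIideal.toIdeal from hr)
      have hJL : J ∈ L := by
        refine key2 J hJprime (fun p hp hpF => ?_)
        exact Set.disjoint_left.1 hJF (show p ∈ hFfilter.toPFilter from hpF) hp
      exact hJL.2 hJK
    obtain ⟨p, hpI, hpF⟩ := hIF
    refine ⟨p, ?_, ?_⟩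
    · ext x
      constructor
      · intro hx
        exact ⟨hKS hx, hpI x hx⟩
      · rintro ⟨hx, hpx⟩
        by_contra h'
        exact hpF x ⟨hx, h'⟩ hpx
    · intro q hq
      have hq' : K = Bset p := by
        ext x
        constructor
        · intro hx
          exact ⟨hKS hx, hpI x hx⟩
        · rintro ⟨hx, hpx⟩
          by_contra h'
          exact hpF x ⟨hx, h'⟩ hpx
      exact hinj (hq.symm.trans hq')
end

section
/- (Reconstruction of the filter lattice.) Let D be a distributive lattice with ⊤ and ⊥. The assignments F ↦ L_F := {x ∈ Spec D | ∀ p ∈ F, p ∉ x} and L ↦ F_L := {p : D | ∀ x ∈ L, p ∉ x} define mutually inverse, inclusion-reversing bijections between the filters of D (Order.PFilter D) and the subsets of Spec D that are ultraproduct-closed and down-closed. In particular, L_F is ultraproduct-closed and down-closed for every filter F, F_L is a filter for every such L, F_{L_F} = F, and L_{F_L} = L. -/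
universe u v

/-- `L_F`: the set of prime ideals disjoint from the filter `F`. -/
def specL {D : Type u} [DistribLattice D] [BoundedOrder D]
    (F : Order.PFilter D) : Set (Order.Ideal D) :=
  {x | x ∈ Spec D ∧ ∀ p ∈ F, p ∉ x}

/-- `F_L`: the set of elements of `D` lying in no member of `L`. -/
def filterOf {D : Type u} [DistribLattice D] [BoundedOrder D]
    (L : Set (Order.Ideal D)) : Set D :=
  {p | ∀ x ∈ L, p ∉ x}


section Aux

variable {D : Type u} [DistribLattice D] [BoundedOrder D]

/-- The ultraproduct ideal of a family of ideals along an ultrafilter. -/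
def ultraIdeal {S : Type u} (f : S → Order.Ideal D) (μ : Ultrafilter S) : Order.Ideal D where
  carrier := {p : D | {s | p ∈ f s} ∈ μ}
  lower' := fun p q hqp hp =>
    Filter.mem_of_superset hp fun s hs => (f s).lower hqp hs
  nonempty' := ⟨⊥, by
    have h : {s | (⊥ : D) ∈ f s} = Set.univ := Set.eq_univ_of_forall fun s => (f s).bot_mem
    simp only [Set.mem_setOf_eq, h]
    exact Filter.univ_mem⟩
  directed' := fun p hp q hq =>
    ⟨p ⊔ q,
      Filter.mem_of_superset (Filter.inter_mem hp hq)
        (fun s hs => Order.Ideal.sup_mem hs.1 hs.2),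
      le_sup_left, le_sup_right⟩

theorem mem_ultraIdeal {S : Type u} (f : S → Order.Ideal D) (μ : Ultrafilter S) (p : D) :
    p ∈ ultraIdeal f μ ↔ {s | p ∈ f s} ∈ μ := Iff.rfl

/-- Łoś: an ideal characterised as an ultraproduct of prime ideals is prime. -/
theorem ultra_isPrime {S : Type u} (f : S → Order.Ideal D) (μ : Ultrafilter S)
    (hf : ∀ s, (f s).IsPrime) (J : Order.Ideal D)
    (hJ : ∀ p : D, p ∈ J ↔ {s | p ∈ f s} ∈ μ) : J.IsPrime := by
  haveI : J.IsProper := by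
    refine Order.Ideal.isProper_of_notMem (p := ⊤) ?_
    rw [hJ]
    intro h
    obtain ⟨s, hs⟩ := Ultrafilter.nonempty_of_mem h
    exact (hf s).toIsProper.top_notMem hs
  refine Order.Ideal.IsPrime.of_mem_or_mem ?_
  intro p q hpq
  rw [hJ] at hpq
  rw [hJ, hJ, ← Ultrafilter.union_mem_iff]
  exact Filter.mem_of_superset hpq fun s hs => (hf s).mem_or_mem hs

/-- prime ideal containing `p`, disjoint from the filter `F`. -/
lemma exists_prime_of_notMem (F : Order.PFilter D) {p : D} (hp : p ∉ F) :
    ∃ J : Order.Ideal D, J.IsPrime ∧ p ∈ J ∧ ∀ q ∈ F, q ∉ J := by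
  obtain ⟨J, hJp, hIJ, hdisj⟩ := DistribLattice.prime_ideal_of_disjoint_filter_ideal
    (F := F) (I := Order.Ideal.principal p)
    (by
      rw [Set.disjoint_left]
      intro q hqF hqp
      exact hp (Order.PFilter.mem_of_le (Order.Ideal.mem_principal.mp hqp) hqF))
  exact ⟨J, hJp, hIJ Order.Ideal.mem_principal_self,
    fun q hq hqJ => Set.disjoint_left.mp hdisj hq hqJ⟩

lemma isPFilter_filterOf {L : Set (Order.Ideal D)} (hSpec : L ⊆ Spec D) :
    Order.IsPFilter (filterOf L) := by
  refine Order.IsPFilter.of_def ⟨⊤, fun x hx => (hSpec hx).toIsProper.top_notMem⟩ ?_ ?_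
  · intro p hp q hq
    exact ⟨p ⊓ q,
      fun x hx hmem => ((hSpec hx).mem_or_mem hmem).elim (hp x hx) (hq x hx),
      inf_le_left, inf_le_right⟩
  · intro p q hpq hp x hx hq
    exact hp x hx (x.lower hpq hq)

/-- If every element of the ideal `T` lies in some member of `L`, then the whole of `T`
is contained in a single member of `L` (via an ultraproduct). -/
lemma exists_mem_L_of_ideal_covered {L : Set (Order.Ideal D)} (hU : UltraClosed D L)
    (T : Order.Ideal D) (hT : ∀ t ∈ T, ∃ y ∈ L, t ∈ y) :
    ∃ J ∈ L, (T : Set D) ⊆ (J : Set D) := by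
  classical
  let S : Type u := {t : D // t ∈ T}
  choose y hyL hty using fun s : S => hT s.1 s.2
  let U : S → Set S := fun t => {s | t.1 ≤ s.1}
  obtain ⟨t0, ht0⟩ := T.nonempty
  let F0 : Filter S :=
    { sets := {A | ∃ t : S, U t ⊆ A}
      univ_sets := ⟨⟨t0, ht0⟩, Set.subset_univ _⟩
      sets_of_superset := fun ⟨t, ht⟩ hAB => ⟨t, ht.trans hAB⟩
      inter_sets := fun ⟨t1, h1⟩ ⟨t2, h2⟩ => by
        obtain ⟨t3, ht3, h13, h23⟩ := T.directed t1.1 t1.2 t2.1 t2.2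
        exact ⟨⟨t3, ht3⟩, fun s hs => ⟨h1 (le_trans h13 hs), h2 (le_trans h23 hs)⟩⟩ }
  haveI : F0.NeBot := by
    rw [Filter.neBot_iff]
    intro h
    have : (∅ : Set S) ∈ F0 := by rw [h]; exact Filter.mem_bot
    obtain ⟨t, ht⟩ := this
    exact ht (le_refl t.1 : t ∈ U t)
  let μ : Ultrafilter S := Ultrafilter.of F0
  refine ⟨ultraIdeal y μ, hU S y μ _ hyL (fun p => Iff.rfl), ?_⟩
  intro t ht
  rw [SetLike.mem_coe, mem_ultraIdeal]
  refine Filter.mem_of_superset (Ultrafilter.of_le F0 ⟨⟨t, ht⟩, le_refl _⟩) ?_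
  intro s hs
  exact (y s).lower hs (hty s)


/-- Step A: separate a point of `x` from a non-point by a member of `L`. -/
lemma step_A {L : Set (Order.Ideal D)} (hSpec : L ⊆ Spec D) (hU : UltraClosed D L)
    (hD : DownClosed D L) {x : Order.Ideal D} (hx : x.IsPrime)
    (hdisj : ∀ p ∈ x, ∃ y ∈ L, p ∈ y) {a b : D} (ha : a ∈ x) (hb : b ∉ x) :
    ∃ z ∈ L, a ∈ z ∧ b ∉ z := by
  let T : Order.Ideal D :=
    { carrier := {d : D | d ⊓ b ≤ a}
      lower' := fun p q hqp hp => le_trans (inf_le_inf_right b hqp) hp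
      nonempty' := ⟨⊥, by simp⟩
      directed' := fun p hp q hq => ⟨p ⊔ q, by
        simp only [Set.mem_setOf_eq, inf_sup_right] at *
        exact sup_le hp hq, le_sup_left, le_sup_right⟩ }
  have hmemT : ∀ d : D, d ∈ T ↔ d ⊓ b ≤ a := fun d => Iff.rfl
  have haT : a ∈ T := inf_le_left
  have hTx : ∀ t ∈ T, t ∈ x := by
    intro t ht
    rcases hx.mem_or_mem (x.lower (ht : t ⊓ b ≤ a) ha) with h | h
    · exact h
    · exact absurd h hb
  obtain ⟨J, hJL, hTJ⟩ := exists_mem_L_of_ideal_covered hU T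
    (fun t ht => hdisj t (hTx t ht))
  have hJprime : J.IsPrime := hSpec hJL
  -- the filter G
  have hGfilter : Order.IsPFilter {c : D | ∃ d, d ∉ J ∧ d ⊓ b ≤ c} := by
    refine Order.IsPFilter.of_def ⟨⊤, ⊤, hJprime.toIsProper.top_notMem, le_top⟩ ?_ ?_
    · rintro c1 ⟨d1, hd1, hle1⟩ c2 ⟨d2, hd2, hle2⟩
      refine ⟨c1 ⊓ c2, ⟨d1 ⊓ d2, ?_, ?_⟩, inf_le_left, inf_le_right⟩
      · intro h
        rcases hJprime.mem_or_mem h with h | h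
        exacts [hd1 h, hd2 h]
      · exact le_inf (le_trans (inf_le_inf_right b inf_le_left) hle1)
          (le_trans (inf_le_inf_right b inf_le_right) hle2)
    · rintro c c' hcc' ⟨d, hd, hle⟩
      exact ⟨d, hd, hle.trans hcc'⟩
  set G : Order.PFilter D := hGfilter.toPFilter with hGdef
  have hGmem : ∀ c : D, c ∈ G ↔ ∃ d, d ∉ J ∧ d ⊓ b ≤ c := fun c => Iff.rfl
  have hdisjGT : Disjoint (G : Set D) (T : Set D) := by
    rw [Set.disjoint_left]
    rintro c ⟨d, hd, hle⟩ hcT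
    refine hd (hTJ ?_)
    have : d ⊓ b ≤ a := le_trans (le_inf hle inf_le_right) (hcT : c ⊓ b ≤ a)
    exact this
  obtain ⟨z, hzprime, hTz, hdisjGz⟩ :=
    DistribLattice.prime_ideal_of_disjoint_filter_ideal (F := G) (I := T) hdisjGT
  have hbG : b ∈ G := ⟨⊤, hJprime.toIsProper.top_notMem, by simp⟩
  have hbz : b ∉ z := Set.disjoint_left.mp hdisjGz hbG
  have hzJ : z ≤ J := by
    intro d hd
    by_contra hdJ
    exact Set.disjoint_left.mp hdisjGz (⟨d, hdJ, inf_le_left⟩ : d ∈ G) hd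
  exact ⟨z, hD J hJL z hzprime hzJ, hTz haT, hbz⟩

/-- Step B: a prime ideal all of whose elements are covered by `L` belongs to `L`. -/
lemma mem_L_of_covered {L : Set (Order.Ideal D)} (hSpec : L ⊆ Spec D) (hU : UltraClosed D L)
    (hD : DownClosed D L) {x : Order.Ideal D} (hx : x.IsPrime)
    (hdisj : ∀ p ∈ x, ∃ y ∈ L, p ∈ y) : x ∈ L := by
  classical
  let S : Type u := {q : D × D // q.1 ∈ x ∧ q.2 ∉ x}
  choose z hzL hz1 hz2 using fun s : S => step_A hSpec hU hD hx hdisj s.2.1 s.2.2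
  let V : S → Set S := fun t => {s | t.1.1 ≤ s.1.1 ∧ s.1.2 ≤ t.1.2}
  have hVself : ∀ t : S, t ∈ V t := fun t => ⟨le_refl _, le_refl _⟩
  let F1 : Filter S :=
    { sets := {A | ∃ t : S, V t ⊆ A}
      univ_sets := ⟨⟨(⊥, ⊤), x.bot_mem, hx.toIsProper.top_notMem⟩, Set.subset_univ _⟩
      sets_of_superset := fun ⟨t, ht⟩ hAB => ⟨t, ht.trans hAB⟩
      inter_sets := fun {A B} ⟨t1, h1⟩ ⟨t2, h2⟩ => by
        refine ⟨⟨(t1.1.1 ⊔ t2.1.1, t1.1.2 ⊓ t2.1.2),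
          Order.Ideal.sup_mem t1.2.1 t2.2.1, ?_⟩, ?_⟩
        · intro h
          rcases hx.mem_or_mem h with h | h
          exacts [t1.2.2 h, t2.2.2 h]
        · intro s hs
          exact ⟨h1 ⟨le_trans le_sup_left hs.1, le_trans hs.2 inf_le_left⟩,
            h2 ⟨le_trans le_sup_right hs.1, le_trans hs.2 inf_le_right⟩⟩ }
  haveI : F1.NeBot := by
    rw [Filter.neBot_iff]
    intro h
    have : (∅ : Set S) ∈ F1 := by rw [h]; exact Filter.mem_bot
    obtain ⟨t, ht⟩ := this
    exact ht (hVself t)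
  let μ : Ultrafilter S := Ultrafilter.of F1
  refine hU S z μ x hzL ?_
  intro p
  constructor
  · intro hp
    refine Filter.mem_of_superset
      (Ultrafilter.of_le F1 (⟨⟨(p, ⊤), hp, hx.toIsProper.top_notMem⟩, le_refl _⟩ : _ ∈ F1)) ?_
    intro s hs
    exact (z s).lower hs.1 (hz1 s)
  · intro hμ
    by_contra hp
    have hV : V ⟨(⊥, p), x.bot_mem, hp⟩ ∈ μ :=
      Ultrafilter.of_le F1 ⟨⟨(⊥, p), x.bot_mem, hp⟩, le_refl _⟩
    obtain ⟨s, hs1, hs2⟩ := Ultrafilter.nonempty_of_mem (Filter.inter_mem hμ hV)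
    exact hz2 s ((z s).lower hs2.2 hs1)

end Aux


/-- Reconstruction of the filter lattice: `F ↦ L_F` and `L ↦ F_L` are mutually
inverse, inclusion-reversing bijections between filters of `D` and
ultraproduct-closed down-closed subsets of `Spec D`. -/
theorem filter_lattice_reconstruction {D : Type u} [DistribLattice D] [BoundedOrder D] :
    (∀ F : Order.PFilter D,
      specL F ⊆ Spec D ∧ UltraClosed D (specL F) ∧ DownClosed D (specL F)) ∧
    (∀ L : Set (Order.Ideal D), L ⊆ Spec D → UltraClosed D L → DownClosed D L →
      ∃ F : Order.PFilter D, (F : Set D) = filterOf L) ∧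
    (∀ F : Order.PFilter D, filterOf (specL F) = (F : Set D)) ∧
    (∀ L : Set (Order.Ideal D), L ⊆ Spec D → UltraClosed D L → DownClosed D L →
      ∀ F : Order.PFilter D, (F : Set D) = filterOf L → specL F = L) ∧
    (∀ F G : Order.PFilter D, F ≤ G ↔ specL G ⊆ specL F) := by
  refine ⟨?_, ?_, ?_, ?_, ?_⟩
  · -- (1)
    intro F
    refine ⟨fun x hx => hx.1, ?_, ?_⟩
    · intro S f μ J hf hJ
      refine ⟨ultra_isPrime f μ (fun s => (hf s).1) J hJ, ?_⟩
      intro p hpF hpJ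
      obtain ⟨s, hs⟩ := Ultrafilter.nonempty_of_mem ((hJ p).1 hpJ)
      exact (hf s).2 p hpF hs
    · intro x hx y hy hyx
      exact ⟨hy, fun p hpF hpy => hx.2 p hpF (Order.Ideal.mem_of_mem_of_le hpy hyx)⟩
  · -- (2)
    intro L hS _ _
    exact ⟨(isPFilter_filterOf hS).toPFilter, rfl⟩
  · -- (3)
    intro F
    ext p
    constructor
    · intro h
      by_contra hpF
      obtain ⟨J, hJprime, hpJ, hdisj⟩ := exists_prime_of_notMem F hpF
      exact h J ⟨hJprime, hdisj⟩ hpJ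
    · intro hpF x hx
      exact hx.2 p hpF
  · -- (4)
    intro L hS hU hD F hF
    ext x
    constructor
    · intro hx
      refine mem_L_of_covered hS hU hD hx.1 ?_
      intro p hp
      by_contra hcon
      push_neg at hcon
      have hpF : p ∈ F := by
        have : p ∈ (F : Set D) := by rw [hF]; exact fun y hy => hcon y hy
        exact this
      exact hx.2 p hpF hp
    · intro hx
      refine ⟨hS hx, ?_⟩
      intro p hpF hpx
      have : p ∈ filterOf L := by rw [← hF]; exact hpF
      exact this x hx hpx
  · -- (5)
    intro F G
    constructor
    · intro h x hx
      exact ⟨hx.1, fun p hpF => hx.2 p (h hpF)⟩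
    · intro h p hpF
      by_contra hpG
      obtain ⟨J, hJprime, hpJ, hdisj⟩ := exists_prime_of_notMem G hpG
      exact (h ⟨hJprime, hdisj⟩).2 p hpF hpJ
end
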